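/- Let C_out ⊆ F_{q^m}^N be MSRD over F_q for the partition N = Σ r_i, and let C_glob = C_out · diag(A_1,...,A_g) with full-rank A_i ∈ F_q^{r_i × n_i}. Then any erasure pattern E ⊆ [n] with Σ_{i=1}^g Rk(A_i|_{R_i}) ≥ k = log_{|F_{q^m}|}|C_out| (where R_i = Γ_i \ E) can be corrected: the restriction map from C_glob to coordinates [n] \ E is injective. -/

import Mathlib

/-- Sum-rank weight of a block vector over `Fq`: sum over the blocks of the
`Fq`-rank of the block (i.e. the `Fq`-dimension of the span of its entries). -/
noncomputable def srWeight (Fq : Type*) [Field Fq] {F : Type*} [Field F] [Algebra Fq F]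
    {g : ℕ} {r : Fin g → ℕ} (c : ∀ i : Fin g, Fin (r i) → F) : ℕ :=
  ∑ i, Module.finrank Fq (Submodule.span Fq (Set.range (c i)))

/-- Minimum sum-rank distance of a (possibly nonlinear) code. -/
noncomputable def srMinDist (Fq : Type*) [Field Fq] {F : Type*} [Field F] [Algebra Fq F]
    {g : ℕ} {r : Fin g → ℕ} (C : Set (∀ i : Fin g, Fin (r i) → F)) : ℕ :=
  sInf {w | ∃ c ∈ C, ∃ d ∈ C, c ≠ d ∧ w = srWeight Fq (c - d)}

/-- Hamming weight of a block vector. -/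
noncomputable def hamWeight {F : Type*} [Field F] [DecidableEq F]
    {g : ℕ} {r : Fin g → ℕ} (c : ∀ i : Fin g, Fin (r i) → F) : ℕ :=
  ∑ i, (Finset.univ.filter fun j => c i j ≠ 0).card

/-- Minimum Hamming distance of a (possibly nonlinear) code. -/
noncomputable def hamMinDist {F : Type*} [Field F] [DecidableEq F]
    {g : ℕ} {r : Fin g → ℕ} (C : Set (∀ i : Fin g, Fin (r i) → F)) : ℕ :=
  sInf {w | ∃ c ∈ C, ∃ d ∈ C, c ≠ d ∧ w = hamWeight (c - d)}

/-- Blockwise multiplication of a block vector by a block-diagonal matrix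
`diag(A_1, …, A_g)` with entries in the subfield `Fq`. -/
noncomputable def blockMul {Fq F : Type*} [Field Fq] [Field F] [Algebra Fq F]
    {g : ℕ} {r n : Fin g → ℕ} (c : ∀ i : Fin g, Fin (r i) → F)
    (A : ∀ i : Fin g, Matrix (Fin (r i)) (Fin (n i)) Fq) :
    ∀ i : Fin g, Fin (n i) → F :=
  fun i j => ∑ t, c i t * algebraMap Fq F (A i t j)

/-- Rank of the submatrix of `A` given by the columns indexed by `R`. -/
noncomputable def colRank {Fq : Type*} [Field Fq] {a b : ℕ}
    (A : Matrix (Fin a) (Fin b) Fq) (R : Finset (Fin b)) : ℕ :=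
  (A.submatrix id (fun j : R => (j : Fin b))).rank

/-- Restriction of a block vector to the unerased coordinates `R_i` in each block. -/
def restrictTo {F : Type*} {g : ℕ} {n : Fin g → ℕ} (R : ∀ i : Fin g, Finset (Fin (n i)))
    (c : ∀ i : Fin g, Fin (n i) → F) : ∀ i : Fin g, (R i) → F :=
  fun i j => c i j.1

open Module in
lemma block_bound_aux {Fq F : Type*} [Field Fq] [Field F] [Algebra Fq F] {a b : ℕ}
    (e : Fin a → F) (A : Matrix (Fin a) (Fin b) Fq) (R : Finset (Fin b))
    (h : ∀ j ∈ R, ∑ t, e t * algebraMap Fq F (A t j) = 0) :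
    Module.finrank Fq (Submodule.span Fq (Set.range e)) + colRank A R ≤ a := by
  classical
  set φ : (Fin a → Fq) →ₗ[Fq] F := Fintype.linearCombination Fq e with hφ
  have hker : Submodule.span Fq
      (Set.range (A.submatrix id (fun j : R => (j : Fin b))).transpose) ≤ LinearMap.ker φ := by
    rw [Submodule.span_le]
    rintro x ⟨j, rfl⟩
    simp only [SetLike.mem_coe, LinearMap.mem_ker]
    calc φ ((A.submatrix id (fun j : R => (j : Fin b))).transpose j)
        = ∑ t, e t * algebraMap Fq F (A t (j : Fin b)) := by
          simp [hφ, Fintype.linearCombination_apply, Algebra.smul_def, mul_comm,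
            Matrix.transpose_apply, Matrix.submatrix_apply]
      _ = 0 := h (j : Fin b) j.2
  have h1 : colRank A R ≤ Module.finrank Fq (LinearMap.ker φ) := by
    rw [colRank, Matrix.rank_eq_finrank_span_cols]
    exact Submodule.finrank_mono hker
  have h2 := LinearMap.finrank_range_add_finrank_ker φ
  have h3 : LinearMap.range φ = Submodule.span Fq (Set.range e) := by
    simp [hφ]
  rw [h3, Module.finrank_fin_fun] at h2
  omega

/-- if the outer code is MSRD of dimension `k` over `F_q` for the
partition `N = Σ r_i`, and the local generator matrices `A_i` are full-rank, then
every erasure pattern whose unerased coordinates `R_i` satisfy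
`Σ_i Rk(A_i|_{R_i}) ≥ k` can be corrected: the restriction map to the unerased
coordinates is injective on the global code. -/

theorem msrd_corrects_erasures
    {Fq F : Type*} [Field Fq] [Fintype Fq] [Field F] [Fintype F] [Algebra Fq F]
    {g : ℕ} {r n : Fin g → ℕ} (k : ℕ) (hk : 1 ≤ k) (hkN : k ≤ ∑ i, r i)
    (Cout : Set (∀ i : Fin g, Fin (r i) → F))
    (hcard : Nat.card Cout =
      Fintype.card Fq ^ (Module.finrank Fq F * k))
    (hd : srMinDist Fq Cout = (∑ i, r i) - k + 1)
    (A : ∀ i : Fin g, Matrix (Fin (r i)) (Fin (n i)) Fq) (hA : ∀ i, (A i).rank = r i)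
    (R : ∀ i : Fin g, Finset (Fin (n i)))
    (hrank : k ≤ ∑ i, colRank (A i) (R i)) :
    Set.InjOn (restrictTo R) ((fun c => blockMul c A) '' Cout) := by
  rintro x ⟨c, hc, rfl⟩ y ⟨d, hdC, rfl⟩ hres
  suffices hcd : c = d by rw [hcd]
  by_contra hne
  -- minimum distance bound
  have hmem : srWeight Fq (c - d) ∈
      {w | ∃ c' ∈ Cout, ∃ d' ∈ Cout, c' ≠ d' ∧ w = srWeight Fq (c' - d')} :=
    ⟨c, hc, d, hdC, hne, rfl⟩
  have hdist : (∑ i, r i) - k + 1 ≤ srWeight Fq (c - d) := by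
    rw [← hd]; exact Nat.sInf_le hmem
  -- the difference vanishes on the unerased columns
  have hzero : ∀ i, ∀ j ∈ R i, ∑ t, (c - d) i t * algebraMap Fq F (A i t j) = 0 := by
    intro i j hj
    have := congrFun (congrFun hres i) ⟨j, hj⟩
    simp only [restrictTo, blockMul] at this
    simp only [Pi.sub_apply, sub_mul, Finset.sum_sub_distrib, this, sub_self]
  have hb : ∀ i : Fin g,
      Module.finrank Fq (Submodule.span Fq (Set.range ((c - d) i))) + colRank (A i) (R i)
        ≤ r i := fun i => block_bound_aux ((c - d) i) (A i) (R i) (hzero i)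
  have hsum : (∑ i, Module.finrank Fq (Submodule.span Fq (Set.range ((c - d) i)))) +
      ∑ i, colRank (A i) (R i) ≤ ∑ i, r i := by
    rw [← Finset.sum_add_distrib]
    exact Finset.sum_le_sum fun i _ => hb i
  have hw : srWeight Fq (c - d) =
      ∑ i, Module.finrank Fq (Submodule.span Fq (Set.range ((c - d) i))) := rfl
  omega
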